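/- Let Γ : ℕ → ℝ be defined recursively by Γ^(l) = ∑_{k=t}^{L} c(k) (Γ^(l-1))^k where t ≥ 1, each c(k) ≥ 0, and Γ^(l-1) ≥ 0. If for some level l we have Γ^(l) ≤ ε · Γ^(l-1) with 0 ≤ ε ≤ 1, then for every m > l, Γ^(m) ≤ ε^(∑_{r=0}^{m-l} t^r) · Γ^(l-1). -/

import Mathlib

/-- Iterated suppression: if `Γ l ≤ ε Γ (l-1)` then for every `m > l`,
`Γ m ≤ ε ^ (∑_{r=0}^{m-l} t^r) * Γ (l-1)`. -/
theorem stmt_0 (t L : ℕ) (ht : 1 ≤ t) (c : ℕ → ℝ) (hc : ∀ k, 0 ≤ c k)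
    (Γ : ℕ → ℝ) (hΓpos : ∀ n, 0 ≤ Γ n)
    (hrec : ∀ n, Γ (n + 1) = ∑ k ∈ Finset.Icc t L, c k * Γ n ^ k)
    (l : ℕ) (hl : 1 ≤ l) (ε : ℝ) (hε0 : 0 ≤ ε) (hε1 : ε ≤ 1)
    (h : Γ l ≤ ε * Γ (l - 1)) :
    ∀ m, l < m → Γ m ≤ ε ^ (∑ r ∈ Finset.range (m - l + 1), t ^ r) * Γ (l - 1) := by
  have key : ∀ j, Γ (l + j) ≤ ε ^ (∑ r ∈ Finset.range (j + 1), t ^ r) * Γ (l - 1) := by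
    intro j
    induction j with
    | zero => simpa using h
    | succ j ih =>
      set S := ∑ r ∈ Finset.range (j + 1), t ^ r with hS
      have hεS0 : 0 ≤ ε ^ S := pow_nonneg hε0 _
      have hεS1 : ε ^ S ≤ 1 := pow_le_one₀ hε0 hε1
      have hl1 : l - 1 + 1 = l := Nat.succ_pred_eq_of_pos hl
      have hΓl1 : Γ l = ∑ k ∈ Finset.Icc t L, c k * Γ (l - 1) ^ k := by
        rw [← hl1]; exact hrec _
      have step : Γ (l + j + 1) ≤ (ε ^ S) ^ t * Γ l := by
        rw [hrec, hΓl1, Finset.mul_sum]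
        apply Finset.sum_le_sum
        intro k hk
        have hkt : t ≤ k := (Finset.mem_Icc.mp hk).1
        have h1 : Γ (l + j) ^ k ≤ (ε ^ S * Γ (l - 1)) ^ k :=
          pow_le_pow_left₀ (hΓpos _) ih k
        have h2 : (ε ^ S * Γ (l - 1)) ^ k = (ε ^ S) ^ k * Γ (l - 1) ^ k := mul_pow _ _ _
        have h3 : (ε ^ S) ^ k ≤ (ε ^ S) ^ t := pow_le_pow_of_le_one hεS0 hεS1 hkt
        calc c k * Γ (l + j) ^ k ≤ c k * ((ε ^ S) ^ k * Γ (l - 1) ^ k) := by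
              rw [← h2]; exact mul_le_mul_of_nonneg_left h1 (hc k)
          _ ≤ c k * ((ε ^ S) ^ t * Γ (l - 1) ^ k) := by
              refine mul_le_mul_of_nonneg_left ?_ (hc k)
              exact mul_le_mul_of_nonneg_right h3 (pow_nonneg (hΓpos _) k)
          _ = (ε ^ S) ^ t * (c k * Γ (l - 1) ^ k) := by ring
      have step2 : Γ (l + (j + 1)) ≤ (ε ^ S) ^ t * (ε * Γ (l - 1)) := by
        have heq : l + (j + 1) = l + j + 1 := by ring
        rw [heq]
        exact step.trans (mul_le_mul_of_nonneg_left h (pow_nonneg hεS0 t))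
      refine step2.trans_eq ?_
      have hexp : ∑ r ∈ Finset.range (j + 1 + 1), t ^ r = S * t + 1 := by
        rw [geom_sum_succ, ← hS, Nat.mul_comm]
      rw [hexp, pow_succ, pow_mul]
      ring
  intro m hm
  have := key (m - l)
  rwa [Nat.add_sub_cancel' hm.le] at this
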